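/- Let V be a finite-dimensional complex vector space, A, B alternating bilinear forms on V with B nondegenerate, and P = B^{-1}A the recursion operator (B(P x, y) = A(x, y) for all x, y). Let P = S + N be its Jordan–Chevalley decomposition: S semisimple, N nilpotent, S∘N = N∘S. Define the bilinear form A' by A'(x, y) := B(N x, y). If a subspace L ⊆ V is bi-Lagrangian with respect to the pencil {A + λB}, then L is also bi-Lagrangian with respect to the pencil {A' + λB}. -/

import Mathlib

open Module LinearMap

variable {V : Type*} [AddCommGroup V] [Module ℂ V]

/-- The rank of a bilinear form: the rank of the induced map `V → V*`. -/
noncomputable def formRank (C : V →ₗ[ℂ] V →ₗ[ℂ] ℂ) : ℕ :=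
  Module.finrank ℂ (LinearMap.range C)

/-- The member of the pencil `{A + λB : λ ∈ ℂ ∪ {∞}}` at `λ`; `none` is `λ = ∞`. -/
noncomputable def pencilForm (A B : V →ₗ[ℂ] V →ₗ[ℂ] ℂ) : Option ℂ → V →ₗ[ℂ] V →ₗ[ℂ] ℂ
  | none => B
  | some l => A + l • B

/-- The rank of the pencil: `max_{λ ∈ ℂ ∪ {∞}} rank (A + λB)`. -/
noncomputable def pencilRank (A B : V →ₗ[ℂ] V →ₗ[ℂ] ℂ) : ℕ :=
  ⨆ l : Option ℂ, formRank (pencilForm A B l)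

/-- A subspace `U` is bi-isotropic if both `A` and `B` vanish on `U × U`. -/
def biIsotropic (A B : V →ₗ[ℂ] V →ₗ[ℂ] ℂ) (U : Submodule ℂ V) : Prop :=
  ∀ u ∈ U, ∀ v ∈ U, A u v = 0 ∧ B u v = 0

/-- An endomorphism is semisimple if every invariant subspace admits an
invariant complement. -/
def IsSemisimpleEnd (S : V →ₗ[ℂ] V) : Prop :=
  ∀ p : Submodule ℂ V, Submodule.map S p ≤ p →
    ∃ q : Submodule ℂ V, Submodule.map S q ≤ q ∧ IsCompl p q

lemma pencilRank_eq_finrank [FiniteDimensional ℂ V]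
    (A B : V →ₗ[ℂ] V →ₗ[ℂ] ℂ)
    (hBnd : ∀ v : V, (∀ w : V, B v w = 0) → v = 0) :
    pencilRank A B = finrank ℂ V := by
  have hub : ∀ l : Option ℂ, formRank (pencilForm A B l) ≤ finrank ℂ V := by
    intro l
    calc formRank (pencilForm A B l) ≤ finrank ℂ (Module.Dual ℂ V) :=
          Submodule.finrank_le _
      _ = finrank ℂ V := Subspace.dual_finrank_eq
  refine le_antisymm (ciSup_le hub) ?_
  have hinj : Function.Injective B := by
    rw [← LinearMap.ker_eq_bot]
    ext v
    simp only [LinearMap.mem_ker, Submodule.mem_bot]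
    constructor
    · intro hv
      exact hBnd v fun w => by rw [hv]; rfl
    · rintro rfl; simp
  have hB : formRank (pencilForm A B none) = finrank ℂ V := by
    unfold pencilForm formRank
    exact LinearMap.finrank_range_of_inj hinj
  rw [← hB]
  exact le_ciSup ⟨finrank ℂ V, by rintro _ ⟨l, rfl⟩; exact hub l⟩ none

/-- For `B` nondegenerate, `P = B⁻¹A` with Jordan–Chevalley
decomposition `P = S + N` (`S` semisimple, `N` nilpotent, commuting), and
`A'(x,y) = B(Nx,y)` (i.e. `A' = B ∘ₗ N`): any subspace `L` bi-Lagrangian w.r.t.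
`{A + λB}` is bi-Lagrangian w.r.t. `{A' + λB}`. Bi-Lagrangian is encoded as
bi-isotropic together with `2·dim L + rk 𝓛 = 2·dim V`. -/
theorem statement_3 [FiniteDimensional ℂ V]
    (A B : V →ₗ[ℂ] V →ₗ[ℂ] ℂ) (hAalt : A.IsAlt) (hBalt : B.IsAlt)
    (hBnd : ∀ v : V, (∀ w : V, B v w = 0) → v = 0)
    (P S N : V →ₗ[ℂ] V)
    (hP : ∀ x y : V, B (P x) y = A x y)
    (hPSN : P = S + N)
    (hS : IsSemisimpleEnd S)
    (hN : ∃ k : ℕ, N ^ k = 0)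
    (hcomm : S ∘ₗ N = N ∘ₗ S)
    (L : Submodule ℂ V)
    (hLiso : biIsotropic A B L)
    (hLdim : 2 * finrank ℂ L + pencilRank A B = 2 * finrank ℂ V) :
    biIsotropic (B ∘ₗ N) B L ∧
      2 * finrank ℂ L + pencilRank (B ∘ₗ N) B = 2 * finrank ℂ V := by
  have hrk : pencilRank A B = finrank ℂ V := pencilRank_eq_finrank A B hBnd
  have hrk' : pencilRank (B ∘ₗ N) B = finrank ℂ V := pencilRank_eq_finrank _ B hBnd
  have hdimL : 2 * finrank ℂ L = finrank ℂ V := by omega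
  -- B as a bilinear form
  have hBrefl : B.IsRefl := hBalt.isRefl
  have hBndg : LinearMap.BilinForm.Nondegenerate B :=
    ⟨hBnd, fun y hy => hBnd y (fun w => hBrefl _ _ (hy w))⟩
  -- L equals its B-orthogonal
  have hLle : L ≤ LinearMap.BilinForm.orthogonal B L := by
    intro v hv u hu
    exact (hLiso u hu v hv).2
  have hperp : LinearMap.BilinForm.orthogonal B L = L := by
    refine (Submodule.eq_of_le_of_finrank_le hLle ?_).symm
    rw [LinearMap.BilinForm.finrank_orthogonal hBndg L]
    omega
  -- P preserves L
  have hPL : ∀ x ∈ L, P x ∈ L := by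
    intro x hx
    rw [← hperp]
    intro u hu
    exact hBrefl _ _ (by rw [hP]; exact (hLiso x hx u hu).1)
  -- S is semisimple in the Mathlib sense
  have hS_ss : Module.End.IsSemisimple S := by
    rw [Module.End.isSemisimple_iff]
    intro p hp
    obtain ⟨q, hq1, hq2⟩ := hS p (Submodule.map_le_iff_le_comap.mpr hp)
    exact ⟨q, Submodule.map_le_iff_le_comap.mp hq1, hq2⟩
  -- S commutes with P
  have hSN : S * N = N * S := hcomm
  have hSP : Commute S P := by
    rw [hPSN]
    exact (Commute.refl S).add_right hSN
  -- Jordan–Chevalley from Mathlib, with polynomial components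
  obtain ⟨n', hn'mem, s', hs'mem, hn'nil, hs'ss, hP'⟩ :=
    Module.End.exists_isNilpotent_isSemisimple (f := P)
  have hSn' : Commute S n' :=
    Algebra.commute_of_mem_adjoin_singleton_of_commute hn'mem hSP
  have hSs' : Commute S s' :=
    Algebra.commute_of_mem_adjoin_singleton_of_commute hs'mem hSP
  have hNeq : N = P - S := by rw [hPSN]; abel
  have hNn' : Commute N n' := by
    rw [hNeq]
    exact (Algebra.commute_of_mem_adjoin_self hn'mem).sub_left hSn'
  have hkey : S - s' = n' - N := by
    rw [sub_eq_sub_iff_add_eq_add, ← hPSN]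
    exact hP'
  have hnil : IsNilpotent (n' - N) := by
    obtain ⟨k, hk⟩ := hN
    exact (hNn'.symm).isNilpotent_sub hn'nil ⟨k, hk⟩
  have hss : Module.End.IsSemisimple (S - s') :=
    Module.End.IsSemisimple.sub_of_commute hSs' hS_ss hs'ss
  have hSs'eq : S = s' := by
    have h0 : S - s' = 0 :=
      Module.End.eq_zero_of_isNilpotent_isSemisimple (hkey ▸ hnil) hss
    exact sub_eq_zero.mp h0
  -- hence S is a polynomial in P, so S preserves L
  have hpow : ∀ k : ℕ, ∀ x ∈ L, (P ^ k) x ∈ L := by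
    intro k
    induction k with
    | zero => intro x hx; simpa using hx
    | succ k ih =>
      intro x hx
      rw [pow_succ]
      exact ih _ (hPL x hx)
  have haev : ∀ q : Polynomial ℂ, ∀ x ∈ L, (Polynomial.aeval P q) x ∈ L := by
    intro q
    induction q using Polynomial.induction_on' with
    | add p r hp hr =>
      intro x hx
      rw [map_add, LinearMap.add_apply]
      exact L.add_mem (hp x hx) (hr x hx)
    | monomial n c =>
      intro x hx
      rw [Polynomial.aeval_monomial]
      have h : ((algebraMap ℂ (Module.End ℂ V)) c * P ^ n) x = c • ((P ^ n) x) := by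
        simp [Module.algebraMap_end_apply, Module.End.mul_apply]
      rw [h]
      exact L.smul_mem _ (hpow n x hx)
  have hSL : ∀ x ∈ L, S x ∈ L := by
    rw [Algebra.adjoin_singleton_eq_range_aeval, AlgHom.mem_range] at hs'mem
    obtain ⟨q, hq⟩ := hs'mem
    intro x hx
    rw [hSs'eq, ← hq]
    exact haev q x hx
  have hNL : ∀ x ∈ L, N x ∈ L := by
    intro x hx
    rw [hNeq]
    exact L.sub_mem (hPL x hx) (hSL x hx)
  refine ⟨?_, by omega⟩
  intro u hu v hv
  refine ⟨?_, (hLiso u hu v hv).2⟩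
  exact (hLiso (N u) (hNL u hu) v hv).2
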